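/- Let V be a nonzero finite-dimensional real inner product space, let M be a subset of End(V) closed under adjoints, let Z be the commutant of M in End(V), and let π_Z be the projection of End(V) onto Z along Z^⊥. Let S ∈ End(V) be self-adjoint and satisfy Tr(S∘z) = 0 for every z ∈ Z. Then π_Z(exp(S)) is self-adjoint and satisfies ⟨π_Z(exp(S))(v), v⟩ ≥ ⟨v, v⟩ for every v ∈ V; in particular π_Z(exp(S)) is positive definite and has no eigenvalue smaller than 1. -/

import Mathlib

open scoped RealInnerProductSpace Nat

/-- The commutant of a set `M` of continuous endomorphisms of `V`:
all `A ∈ End(V)` commuting with every element of `M`. -/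
def setCommutant {V : Type*} [NormedAddCommGroup V] [InnerProductSpace ℝ V]
    [FiniteDimensional ℝ V] (M : Set (V →L[ℝ] V)) : Submodule ℝ (V →L[ℝ] V) where
  carrier := {A | ∀ m ∈ M, A ∘L m = m ∘L A}
  add_mem' := by
    intro a b ha hb m hm
    simp [ContinuousLinearMap.add_comp, ContinuousLinearMap.comp_add, ha m hm, hb m hm]
  zero_mem' := by intro m hm; simp
  smul_mem' := by
    intro c a ha m hm
    simp [ContinuousLinearMap.smul_comp, ContinuousLinearMap.comp_smulₛₗ, ha m hm]

/-- The orthogonal of a subspace `Z` of `End(V)` with respect to the trace form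
`(A, B) ↦ Tr(A ∘ B)`. -/
def traceOrthogonal {V : Type*} [NormedAddCommGroup V] [InnerProductSpace ℝ V]
    [FiniteDimensional ℝ V] (Z : Submodule ℝ (V →L[ℝ] V)) : Submodule ℝ (V →L[ℝ] V) where
  carrier := {A | ∀ z ∈ Z, LinearMap.trace ℝ V (A ∘L z).toLinearMap = 0}
  add_mem' := by
    intro a b ha hb z hz
    rw [ContinuousLinearMap.add_comp, ContinuousLinearMap.coe_add, map_add,
      ha z hz, hb z hz, add_zero]
  zero_mem' := by intro z hz; simp
  smul_mem' := by
    intro c a ha z hz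
    rw [ContinuousLinearMap.smul_comp, ContinuousLinearMap.coe_smul, map_smul,
      ha z hz, smul_zero]

section AuxCE

set_option linter.unusedSectionVars false

variable {V : Type*} [NormedAddCommGroup V] [InnerProductSpace ℝ V] [FiniteDimensional ℝ V]

lemma mem_traceOrthogonal' {Z : Submodule ℝ (V →L[ℝ] V)} {A : V →L[ℝ] V} :
    A ∈ traceOrthogonal Z ↔ ∀ z ∈ Z, LinearMap.trace ℝ V (A ∘L z).toLinearMap = 0 :=
  Iff.rfl

lemma trace_eq_sum_inner' {ι : Type*} [Fintype ι] [DecidableEq ι]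
    (b : OrthonormalBasis ι ℝ V) (f : V →L[ℝ] V) :
    LinearMap.trace ℝ V f.toLinearMap = ∑ i, ⟪f (b i), b i⟫ := by
  rw [LinearMap.trace_eq_matrix_trace ℝ b.toBasis, Matrix.trace]
  congr 1
  ext i
  rw [Matrix.diag_apply, LinearMap.toMatrix_apply, OrthonormalBasis.coe_toBasis,
    OrthonormalBasis.coe_toBasis_repr_apply, OrthonormalBasis.repr_apply_apply,
    real_inner_comm]
  rfl

lemma trace_clm_comp_comm (A C : V →L[ℝ] V) :
    LinearMap.trace ℝ V (A ∘L C).toLinearMap = LinearMap.trace ℝ V (C ∘L A).toLinearMap := by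
  rw [ContinuousLinearMap.toLinearMap_comp, ContinuousLinearMap.toLinearMap_comp, LinearMap.trace_comp_comm']

lemma trace_clm_adjoint (f : V →L[ℝ] V) :
    LinearMap.trace ℝ V (ContinuousLinearMap.adjoint f).toLinearMap
      = LinearMap.trace ℝ V f.toLinearMap := by
  classical
  let b := stdOrthonormalBasis ℝ V
  rw [trace_eq_sum_inner' b, trace_eq_sum_inner' b]
  congr 1
  ext i
  rw [ContinuousLinearMap.adjoint_inner_left, real_inner_comm]

noncomputable def traceForm : LinearMap.BilinForm ℝ (V →L[ℝ] V) :=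
  LinearMap.mk₂ ℝ (fun A C => LinearMap.trace ℝ V (A ∘L C).toLinearMap)
    (by intro A A' C
        simp only [ContinuousLinearMap.add_comp, ContinuousLinearMap.coe_add, map_add])
    (by intro c A C
        simp only [ContinuousLinearMap.smul_comp, ContinuousLinearMap.coe_smul, map_smul,
          smul_eq_mul])
    (by intro A C C'
        simp only [ContinuousLinearMap.comp_add, ContinuousLinearMap.coe_add, map_add])
    (by intro c A C
        simp only [ContinuousLinearMap.comp_smulₛₗ, ContinuousLinearMap.coe_smul, map_smul,
          RingHom.id_apply, smul_eq_mul])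

lemma traceForm_apply (A C : V →L[ℝ] V) :
    traceForm A C = LinearMap.trace ℝ V (A ∘L C).toLinearMap := rfl

lemma traceForm_isRefl : (traceForm (V := V)).IsRefl := by
  intro A C h
  rw [traceForm_apply, trace_clm_comp_comm]
  exact h

lemma traceForm_orthogonal (Z : Submodule ℝ (V →L[ℝ] V)) :
    (traceForm (V := V)).orthogonal Z = traceOrthogonal Z := by
  ext A
  rw [LinearMap.BilinForm.mem_orthogonal_iff, mem_traceOrthogonal']
  constructor
  · intro h z hz
    have := h z hz
    rwa [traceForm_apply, trace_clm_comp_comm] at this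
  · intro h z hz
    rw [traceForm_apply, trace_clm_comp_comm]
    exact h z hz

lemma isCompl_traceOrthogonal (Z : Submodule ℝ (V →L[ℝ] V))
    (hZ : ∀ z ∈ Z, ContinuousLinearMap.adjoint z ∈ Z) :
    IsCompl Z (traceOrthogonal Z) := by
  classical
  rw [← traceForm_orthogonal]
  apply LinearMap.BilinForm.isCompl_orthogonal_of_restrict_nondegenerate traceForm_isRefl
  apply LinearMap.BilinForm.Nondegenerate.ofSeparatingLeft
  rintro ⟨z, hz⟩ h
  have h0 := h ⟨ContinuousLinearMap.adjoint z, hZ z hz⟩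
  simp only [LinearMap.BilinForm.restrict_apply, LinearMap.domRestrict_apply] at h0
  rw [traceForm_apply, trace_eq_sum_inner' (stdOrthonormalBasis ℝ V)] at h0
  have hterm : ∀ i, ⟪(z ∘L ContinuousLinearMap.adjoint z) (stdOrthonormalBasis ℝ V i),
      stdOrthonormalBasis ℝ V i⟫
      = ⟪ContinuousLinearMap.adjoint z (stdOrthonormalBasis ℝ V i),
          ContinuousLinearMap.adjoint z (stdOrthonormalBasis ℝ V i)⟫ := by
    intro i
    rw [ContinuousLinearMap.comp_apply, real_inner_comm, ← ContinuousLinearMap.adjoint_inner_left]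
  rw [Finset.sum_congr rfl (fun i _ => hterm i)] at h0
  have hzero : ∀ i, ContinuousLinearMap.adjoint z (stdOrthonormalBasis ℝ V i) = 0 := by
    intro i
    have hle : ∀ i ∈ Finset.univ,
        (0:ℝ) ≤ ⟪ContinuousLinearMap.adjoint z (stdOrthonormalBasis ℝ V i),
          ContinuousLinearMap.adjoint z (stdOrthonormalBasis ℝ V i)⟫ :=
      fun i _ => real_inner_self_nonneg
    have := (Finset.sum_eq_zero_iff_of_nonneg hle).mp h0 i (Finset.mem_univ i)
    exact inner_self_eq_zero.mp this
  have hadj : ContinuousLinearMap.adjoint z = 0 := by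
    apply ContinuousLinearMap.coe_injective
    apply (stdOrthonormalBasis ℝ V).toBasis.ext
    intro i
    simp [hzero i]
  apply Subtype.ext
  have := congrArg ContinuousLinearMap.adjoint hadj
  rwa [ContinuousLinearMap.adjoint_adjoint, map_zero] at this

lemma inner_diag_eq_sum {ι : Type*} [Fintype ι] (b : OrthonormalBasis ι ℝ V)
    (A : V →L[ℝ] V) (g : ι → ℝ) (h : ∀ i, A (b i) = g i • b i) (v : V) :
    ⟪A v, v⟫ = ∑ i, g i * (⟪b i, v⟫ * ⟪b i, v⟫) := by
  have hv : A v = ∑ i, (g i * ⟪b i, v⟫) • b i := by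
    conv_lhs => rw [← b.sum_repr' v]
    rw [map_sum]
    congr 1
    ext i
    rw [map_smul, h i, smul_smul, mul_comm]
  rw [hv, sum_inner]
  congr 1
  ext i
  rw [real_inner_smul_left]
  ring

lemma exp_apply_eigenvector (S : V →L[ℝ] V) (v : V) (c : ℝ) (h : S v = c • v) :
    (NormedSpace.exp S) v = Real.exp c • v := by
  have hpow : ∀ n : ℕ, (S ^ n) v = c ^ n • v := by
    intro n
    induction n with
    | zero => simp
    | succ n ih =>
      rw [pow_succ, ContinuousLinearMap.mul_apply, h, map_smul, ih, smul_smul, pow_succ]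
      ring_nf
  have hsum := NormedSpace.expSeries_summable' (𝕂 := ℝ) S
  have hmap := ((hsum.hasSum.map (ContinuousLinearMap.apply ℝ V v)
    (ContinuousLinearMap.apply ℝ V v).continuous).tsum_eq)
  rw [NormedSpace.exp_eq_tsum ℝ]
  have h2 : (ContinuousLinearMap.apply ℝ V v) (∑' n : ℕ, (n !⁻¹ : ℝ) • S ^ n)
      = ∑' n : ℕ, (n !⁻¹ : ℝ) • (c ^ n • v) := by
    rw [← hmap]
    congr 1
    ext n
    simp [hpow n]
  have h3 : ∑' n : ℕ, (n !⁻¹ : ℝ) • (c ^ n • v) = (∑' n : ℕ, (n !⁻¹ : ℝ) * c ^ n) • v := by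
    simp_rw [smul_smul]
    rw [Summable.tsum_smul_const]
    simpa [smul_eq_mul] using NormedSpace.expSeries_summable' (𝕂 := ℝ) c
  have h4 : (∑' n : ℕ, (n !⁻¹ : ℝ) * c ^ n) = Real.exp c := by
    rw [Real.exp_eq_exp_ℝ, NormedSpace.exp_eq_tsum ℝ]
    simp [smul_eq_mul]
  calc (∑' n : ℕ, (n !⁻¹ : ℝ) • S ^ n) v
      = (ContinuousLinearMap.apply ℝ V v) (∑' n : ℕ, (n !⁻¹ : ℝ) • S ^ n) := rfl
    _ = Real.exp c • v := by rw [h2, h3, h4]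

end AuxCE

set_option maxHeartbeats 2000000 in
/-- **The projection of `exp(S)` on the commutant is self-adjoint with eigenvalues `≥ 1`.**
Let `M ⊆ End(V)` be closed under adjoints, `Z` its commutant and `π_Z` the projection of
`End(V)` onto `Z` along the trace-form orthogonal `Z^⊥`.  If `S` is self-adjoint and
trace-orthogonal to `Z`, then `π_Z(exp S)` is self-adjoint and satisfies
`⟪π_Z(exp S) v, v⟫ ≥ ⟪v, v⟫` for all `v`; in particular it is positive definite and
has no eigenvalue smaller than `1`. -/
theorem proj_commutant_exp_selfAdjoint_expanding {V : Type*} [NormedAddCommGroup V]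
    [InnerProductSpace ℝ V] [FiniteDimensional ℝ V] [Nontrivial V]
    (M : Set (V →L[ℝ] V))
    (hM : ∀ m ∈ M, ContinuousLinearMap.adjoint m ∈ M)
    (πZ : (V →L[ℝ] V) →ₗ[ℝ] (V →L[ℝ] V))
    (hπZmem : ∀ A, πZ A ∈ setCommutant M)
    (hπZid : ∀ A ∈ setCommutant M, πZ A = A)
    (hπZzero : ∀ A ∈ traceOrthogonal (setCommutant M), πZ A = 0)
    (S : V →L[ℝ] V) (hS : ContinuousLinearMap.adjoint S = S)
    (hSZ : ∀ z ∈ setCommutant M, LinearMap.trace ℝ V (S ∘L z).toLinearMap = 0) :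
    ContinuousLinearMap.adjoint (πZ (NormedSpace.exp S)) = πZ (NormedSpace.exp S) ∧
    (∀ v : V, ⟪(πZ (NormedSpace.exp S)) v, v⟫ ≥ ⟪v, v⟫) ∧
    (∀ v : V, v ≠ 0 → 0 < ⟪(πZ (NormedSpace.exp S)) v, v⟫) ∧
    (∀ μ : ℝ, Module.End.HasEigenvalue (πZ (NormedSpace.exp S)).toLinearMap μ → 1 ≤ μ) := by
  classical
  set E := NormedSpace.exp S with hE
  set Q := πZ E with hQdef
  -- the commutant is closed under adjoints
  have hZstar : ∀ z ∈ setCommutant M, ContinuousLinearMap.adjoint z ∈ setCommutant M := by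
    intro z hz m hm
    have h1 := hz _ (hM m hm)
    have h2 := congrArg ContinuousLinearMap.adjoint h1
    rw [ContinuousLinearMap.adjoint_comp, ContinuousLinearMap.adjoint_comp,
      ContinuousLinearMap.adjoint_adjoint] at h2
    exact h2.symm
  have hcompl := isCompl_traceOrthogonal (setCommutant M) hZstar
  -- decomposition along the projection
  have hdecomp : ∀ A : V →L[ℝ] V, A - πZ A ∈ traceOrthogonal (setCommutant M) := by
    intro A
    have hsup : A ∈ setCommutant M ⊔ traceOrthogonal (setCommutant M) := by
      rw [hcompl.sup_eq_top]; trivial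
    obtain ⟨z, hz, o, ho, hzo⟩ := Submodule.mem_sup.mp hsup
    have hz' : πZ A = z := by
      rw [← hzo, map_add, hπZid z hz, hπZzero o ho, add_zero]
    rw [hz', ← hzo]
    have : z + o - z = o := by abel
    rw [this]
    exact ho
  -- the trace orthogonal is closed under adjoints
  have hOstar : ∀ A ∈ traceOrthogonal (setCommutant M),
      ContinuousLinearMap.adjoint A ∈ traceOrthogonal (setCommutant M) := by
    intro A hA z hz
    have h1 : (ContinuousLinearMap.adjoint A ∘L z)
        = ContinuousLinearMap.adjoint (ContinuousLinearMap.adjoint z ∘L A) := by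
      rw [ContinuousLinearMap.adjoint_comp, ContinuousLinearMap.adjoint_adjoint]
    rw [h1, trace_clm_adjoint, trace_clm_comp_comm]
    exact hA _ (hZstar z hz)
  -- exp S is self-adjoint
  have hEsa : ContinuousLinearMap.adjoint E = E := by
    rw [hE, ← ContinuousLinearMap.star_eq_adjoint, NormedSpace.star_exp,
      ContinuousLinearMap.star_eq_adjoint, hS]
  have hQZ : Q ∈ setCommutant M := hπZmem E
  -- part 1 : Q is self-adjoint
  have part1 : ContinuousLinearMap.adjoint Q = Q := by
    have hoO : E - Q ∈ traceOrthogonal (setCommutant M) := hdecomp E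
    have h1 : ContinuousLinearMap.adjoint Q - Q ∈ setCommutant M :=
      Submodule.sub_mem _ (hZstar Q hQZ) hQZ
    have h2 : ContinuousLinearMap.adjoint Q - Q ∈ traceOrthogonal (setCommutant M) := by
      have heq : ContinuousLinearMap.adjoint Q - Q
          = (E - Q) - ContinuousLinearMap.adjoint (E - Q) := by
        rw [map_sub, hEsa]; abel
      rw [heq]
      exact Submodule.sub_mem _ hoO (hOstar _ hoO)
    have h3 := Submodule.disjoint_def.mp hcompl.disjoint _ h1 h2
    exact sub_eq_zero.mp h3
  -- T = Q - 1
  have h1Z : (1 : V →L[ℝ] V) ∈ setCommutant M := by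
    intro m hm
    simp [ContinuousLinearMap.one_def]
  set T := Q - 1 with hTdef
  have hTZ : T ∈ setCommutant M := Submodule.sub_mem _ hQZ h1Z
  have hTsa : IsSelfAdjoint T := by
    rw [ContinuousLinearMap.isSelfAdjoint_iff']
    rw [hTdef, map_sub, part1]
    congr 1
    rw [← ContinuousLinearMap.star_eq_adjoint, star_one]
  have hTsymm : T.toLinearMap.IsSymmetric :=
    ContinuousLinearMap.isSelfAdjoint_iff_isSymmetric.mp hTsa
  set n := Module.finrank ℝ V with hn
  set b := hTsymm.eigenvectorBasis rfl with hb
  set μ := hTsymm.eigenvalues (rfl : Module.finrank ℝ V = n) with hμdef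
  have hTb : ∀ i, T (b i) = μ i • b i := by
    intro i
    exact Module.End.mem_eigenspace_iff.mp (hTsymm.hasEigenvector_eigenvectorBasis rfl i).1
  set f : Fin n → ℝ := fun i => max (-(μ i)) 0 with hf
  have hfnn : ∀ i, 0 ≤ f i := fun i => le_max_right _ _
  set D : V →L[ℝ] V := ∑ i, f i • ((innerSL ℝ (b i)).smulRight (b i)) with hD
  have hDapply : ∀ x, D x = ∑ i, f i • (⟪b i, x⟫ • b i) := by
    intro x
    rw [hD, ContinuousLinearMap.sum_apply]
    rfl
  have hDdiag : ∀ (x : V) (c : ℝ), T x = c • x → D x = max (-c) 0 • x := by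
    intro x c hx
    have key : ∀ i, f i • (⟪b i, x⟫ • b i) = max (-c) 0 • (⟪b i, x⟫ • b i) := by
      intro i
      have e1 : ⟪T (b i), x⟫ = ⟪b i, T x⟫ := hTsymm (b i) x
      rw [hTb i, hx, real_inner_smul_left, real_inner_smul_right] at e1
      rcases eq_or_ne (⟪b i, x⟫) 0 with h0 | h0
      · simp [h0]
      · have hμc : μ i = c := mul_right_cancel₀ h0 e1
        rw [hf]
        simp only [hμc]
    calc D x = ∑ i, f i • (⟪b i, x⟫ • b i) := hDapply x
      _ = ∑ i, max (-c) 0 • (⟪b i, x⟫ • b i) := Finset.sum_congr rfl (fun i _ => key i)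
      _ = max (-c) 0 • ∑ i, ⟪b i, x⟫ • b i := by rw [Finset.smul_sum]
      _ = max (-c) 0 • x := by rw [b.sum_repr' x]
  have hDb : ∀ i, D (b i) = f i • b i := fun i => hDdiag (b i) (μ i) (hTb i)
  have hDZ : D ∈ setCommutant M := by
    intro m hm
    apply ContinuousLinearMap.coe_injective
    apply b.toBasis.ext
    intro i
    simp only [ContinuousLinearMap.coe_comp, LinearMap.coe_comp, Function.comp_apply,
      OrthonormalBasis.coe_toBasis, ContinuousLinearMap.coe_coe]
    have hTm : T (m (b i)) = μ i • m (b i) := by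
      have hc := ContinuousLinearMap.ext_iff.mp (hTZ m hm) (b i)
      simp only [ContinuousLinearMap.comp_apply] at hc
      rw [hc, hTb i, map_smul]
    rw [hDdiag _ _ hTm, hDb i, map_smul]
  -- trace of A ∘ D over the eigenbasis
  have htrD : ∀ A : V →L[ℝ] V,
      LinearMap.trace ℝ V (A ∘L D).toLinearMap = ∑ i, f i * ⟪A (b i), b i⟫ := by
    intro A
    rw [trace_eq_sum_inner' b]
    congr 1
    ext i
    rw [ContinuousLinearMap.comp_apply, hDb i, map_smul, real_inner_smul_left]
  -- the pointwise inequality for exp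
  have hSsymm : S.toLinearMap.IsSymmetric :=
    ContinuousLinearMap.isSelfAdjoint_iff_isSymmetric.mp
      (ContinuousLinearMap.isSelfAdjoint_iff'.mpr hS)
  set bS := hSsymm.eigenvectorBasis (rfl : Module.finrank ℝ V = n) with hbS
  set ν := hSsymm.eigenvalues (rfl : Module.finrank ℝ V = n) with hν
  have hSb : ∀ i, S (bS i) = ν i • bS i := by
    intro i
    exact Module.End.mem_eigenspace_iff.mp (hSsymm.hasEigenvector_eigenvectorBasis rfl i).1
  have hEb : ∀ i, E (bS i) = Real.exp (ν i) • bS i :=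
    fun i => exp_apply_eigenvector S (bS i) (ν i) (hSb i)
  have hP : ∀ x : V, 0 ≤ ⟪E x, x⟫ - ⟪x, x⟫ - ⟪S x, x⟫ := by
    intro x
    have e1 : ⟪E x, x⟫ = ∑ i, Real.exp (ν i) * (⟪bS i, x⟫ * ⟪bS i, x⟫) :=
      inner_diag_eq_sum bS E _ hEb x
    have e2 : ⟪S x, x⟫ = ∑ i, ν i * (⟪bS i, x⟫ * ⟪bS i, x⟫) :=
      inner_diag_eq_sum bS S ν hSb x
    have e3 : ⟪x, x⟫ = ∑ i, (1 : ℝ) * (⟪bS i, x⟫ * ⟪bS i, x⟫) := by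
      have := inner_diag_eq_sum bS (1 : V →L[ℝ] V) (fun _ => (1:ℝ)) (by simp) x
      simpa using this
    rw [e1, e2, e3, ← Finset.sum_sub_distrib, ← Finset.sum_sub_distrib]
    apply Finset.sum_nonneg
    intro i _
    have h1 : Real.exp (ν i) * (⟪bS i, x⟫ * ⟪bS i, x⟫) - 1 * (⟪bS i, x⟫ * ⟪bS i, x⟫)
        - ν i * (⟪bS i, x⟫ * ⟪bS i, x⟫)
        = (Real.exp (ν i) - 1 - ν i) * (⟪bS i, x⟫ * ⟪bS i, x⟫) := by ring
    rw [h1]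
    apply mul_nonneg
    · have := Real.add_one_le_exp (ν i)
      linarith
    · exact mul_self_nonneg _
  -- main trace computation
  have htr1 : 0 ≤ LinearMap.trace ℝ V ((E - 1 - S) ∘L D).toLinearMap := by
    rw [htrD]
    apply Finset.sum_nonneg
    intro i _
    apply mul_nonneg (hfnn i)
    have hsub : (E - 1 - S) (b i) = E (b i) - b i - S (b i) := by
      simp [ContinuousLinearMap.sub_apply]
    rw [hsub]
    have := hP (b i)
    rw [inner_sub_left, inner_sub_left]
    linarith
  have htr2 : LinearMap.trace ℝ V ((E - 1 - S) ∘L D).toLinearMap = ∑ i, μ i * f i := by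
    have hexp : ((E - 1 - S) ∘L D) = E ∘L D - 1 ∘L D - S ∘L D := by
      rw [ContinuousLinearMap.sub_comp, ContinuousLinearMap.sub_comp]
    rw [hexp]
    rw [ContinuousLinearMap.coe_sub, map_sub, ContinuousLinearMap.coe_sub, map_sub]
    have hSD : LinearMap.trace ℝ V (S ∘L D).toLinearMap = 0 := hSZ D hDZ
    have hEQ : LinearMap.trace ℝ V (E ∘L D).toLinearMap
        = LinearMap.trace ℝ V (Q ∘L D).toLinearMap := by
      have h0 : LinearMap.trace ℝ V ((E - Q) ∘L D).toLinearMap = 0 := hdecomp E D hDZ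
      rw [ContinuousLinearMap.sub_comp, ContinuousLinearMap.coe_sub, map_sub] at h0
      linarith
    rw [hEQ, hSD, sub_zero]
    have h1D : (1 : V →L[ℝ] V) ∘L D = D := by ext x; simp
    have hTD : LinearMap.trace ℝ V (Q ∘L D).toLinearMap
        - LinearMap.trace ℝ V ((1 : V →L[ℝ] V) ∘L D).toLinearMap
        = LinearMap.trace ℝ V (T ∘L D).toLinearMap := by
      rw [hTdef, ContinuousLinearMap.sub_comp, ContinuousLinearMap.coe_sub, map_sub]
    rw [hTD, htrD T]
    congr 1
    ext i
    rw [hTb i, real_inner_smul_left]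
    have hbb : ⟪b i, b i⟫ = (1:ℝ) := by
      rw [real_inner_self_eq_norm_sq, b.orthonormal.1 i, one_pow]
    rw [hbb]
    ring
  -- conclude all eigenvalues of T are nonnegative
  have hμnn : ∀ i, 0 ≤ μ i := by
    have hsq : ∀ i, μ i * f i = -(f i * f i) := by
      intro i
      rcases le_or_gt 0 (μ i) with h | h
      · have hz : f i = 0 := max_eq_right (neg_nonpos.mpr h)
        rw [hz]; ring
      · have hz : f i = -(μ i) := max_eq_left (by linarith)
        rw [hz]; ring
    have h0 : (0:ℝ) ≤ ∑ i, μ i * f i := htr2 ▸ htr1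
    have h1 : ∑ i, μ i * f i = ∑ i, -(f i * f i) :=
      Finset.sum_congr rfl (fun i _ => hsq i)
    have h3 : ∀ i ∈ Finset.univ, (0:ℝ) ≤ f i * f i := fun i _ => mul_self_nonneg _
    have h2 : ∑ i, f i * f i ≤ 0 := by
      rw [h1, Finset.sum_neg_distrib] at h0
      linarith
    have h4 : ∑ i, f i * f i = 0 := le_antisymm h2 (Finset.sum_nonneg h3)
    intro i
    have h5 := (Finset.sum_eq_zero_iff_of_nonneg h3).mp h4 i (Finset.mem_univ i)
    have h6 : f i = 0 := mul_self_eq_zero.mp h5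
    have h7 : -(μ i) ≤ f i := le_max_left _ _
    linarith
  have hTpos : ∀ v : V, 0 ≤ ⟪T v, v⟫ := by
    intro v
    rw [inner_diag_eq_sum b T μ hTb v]
    apply Finset.sum_nonneg
    intro i _
    exact mul_nonneg (hμnn i) (mul_self_nonneg _)
  have part2 : ∀ v : V, ⟪Q v, v⟫ ≥ ⟪v, v⟫ := by
    intro v
    have h1 := hTpos v
    have h2 : T v = Q v - v := by
      rw [hTdef, ContinuousLinearMap.sub_apply, ContinuousLinearMap.one_apply]
    rw [h2, inner_sub_left] at h1
    linarith
  refine ⟨part1, part2, ?_, ?_⟩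
  · intro v hv
    have h1 := part2 v
    have h2 : (0:ℝ) < ⟪v, v⟫ := by
      rw [real_inner_self_eq_norm_sq]
      exact pow_pos (norm_pos_iff.mpr hv) 2
    linarith
  · intro μ0 hμ0
    obtain ⟨v, hv⟩ := hμ0.exists_hasEigenvector
    have hv0 : v ≠ 0 := hv.2
    have hQv : Q v = μ0 • v := hv.apply_eq_smul
    have h1 : ⟪Q v, v⟫ = μ0 * ⟪v, v⟫ := by rw [hQv, real_inner_smul_left]
    have h2 := part2 v
    have h3 : (0:ℝ) < ⟪v, v⟫ := by
      rw [real_inner_self_eq_norm_sq]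
      exact pow_pos (norm_pos_iff.mpr hv0) 2
    nlinarith
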